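/- Let 0 < α < 1/M. Then F(0) = 0, F is differentiable at the origin, and its Fréchet derivative at 0 ∈ ℝ^N is (1 − αM) times the identity map on ℝ^N; equivalently, ∂F_m/∂x_m(0) = 1 − αM for every m and ∂F_m/∂x_n(0) = 0 for every n ≠ m. -/

import Mathlib

/-- The αβ-HMM log-belief-ratio mapping `F`, defined componentwise for `m = 1, …, M-1` by
`F_m(x) = log(((1 - αM)·exp(x_m) + α + α·Σ_n exp(x_n)) / (1 - αM + α + α·Σ_n exp(x_n)))`. -/
noncomputable def abHMM.F (α : ℝ) (M : ℕ) (x : Fin (M - 1) → ℝ) : Fin (M - 1) → ℝ :=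
  fun m => Real.log (((1 - α * M) * Real.exp (x m) + α + α * ∑ n, Real.exp (x n)) /
    (1 - α * M + α + α * ∑ n, Real.exp (x n)))

/-- Remark 1: for `0 < α < 1/M`, `F(0) = 0` and `F` is differentiable at
the origin with Fréchet derivative `(1 - αM)` times the identity map on `ℝ^N`
(equivalently, `∂F_m/∂x_m(0) = 1 - αM` and `∂F_m/∂x_n(0) = 0` for `n ≠ m`). -/
theorem abHMM_F_derivative_at_origin (M : ℕ) (hM : 2 ≤ M) (α : ℝ)
    (hα : 0 < α) (hα' : α < 1 / M) :
    abHMM.F α M (0 : Fin (M - 1) → ℝ) = 0 ∧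
      HasFDerivAt (abHMM.F α M)
        ((1 - α * M) • ContinuousLinearMap.id ℝ (Fin (M - 1) → ℝ))
        (0 : Fin (M - 1) → ℝ) := by
  have hMpos : (0:ℝ) < M := by exact_mod_cast Nat.lt_of_lt_of_le (by norm_num) hM
  have h1 : 0 < 1 - α * M := by
    have := (lt_div_iff₀ hMpos).mp hα'
    linarith
  have hcast : ((M - 1 : ℕ) : ℝ) = (M : ℝ) - 1 := by
    have : 1 ≤ M := le_trans (by norm_num) hM
    push_cast [Nat.cast_sub this]
    ring
  set N := M - 1 with hN
  have hsum0 : ∑ n : Fin N, Real.exp ((0 : Fin N → ℝ) n) = (M : ℝ) - 1 := by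
    simp [Real.exp_zero, Finset.sum_const, hcast]
  -- positivity of numerator and denominator
  have hgpos : ∀ (x : Fin N → ℝ) (m : Fin N),
      0 < (1 - α * M) * Real.exp (x m) + α + α * ∑ n, Real.exp (x n) := by
    intro x m
    have hs : 0 ≤ α * ∑ n, Real.exp (x n) :=
      mul_nonneg hα.le (Finset.sum_nonneg fun _ _ => (Real.exp_pos _).le)
    have := mul_pos h1 (Real.exp_pos (x m))
    linarith
  have hhpos : ∀ x : Fin N → ℝ,
      0 < 1 - α * M + α + α * ∑ n, Real.exp (x n) := by
    intro x
    have hs : 0 ≤ α * ∑ n, Real.exp (x n) :=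
      mul_nonneg hα.le (Finset.sum_nonneg fun _ _ => (Real.exp_pos _).le)
    linarith
  have hg0 : ∀ m : Fin N,
      (1 - α * M) * Real.exp ((0 : Fin N → ℝ) m) + α
        + α * ∑ n, Real.exp ((0 : Fin N → ℝ) n) = 1 := by
    intro m
    rw [hsum0]
    simp [Real.exp_zero]
    ring
  have hh0 : 1 - α * M + α + α * ∑ n, Real.exp ((0 : Fin N → ℝ) n) = 1 := by
    rw [hsum0]; ring
  constructor
  · funext m
    show Real.log _ = _
    rw [hg0 m, hh0, div_one, Real.log_one]
    rfl
  · rw [hasFDerivAt_pi']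
    intro m
    have hexp : ∀ n : Fin N, HasFDerivAt (fun x : Fin N → ℝ => Real.exp (x n))
        (ContinuousLinearMap.proj n : (Fin N → ℝ) →L[ℝ] ℝ) 0 := by
      intro n
      have h := ((ContinuousLinearMap.proj n : (Fin N → ℝ) →L[ℝ] ℝ).hasFDerivAt
        (x := (0 : Fin N → ℝ))).exp
      simpa using h
    have hS : HasFDerivAt (fun x : Fin N → ℝ => ∑ n, Real.exp (x n))
        (∑ n, (ContinuousLinearMap.proj n : (Fin N → ℝ) →L[ℝ] ℝ)) 0 :=
      HasFDerivAt.fun_sum (fun n _ => hexp n)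
    have hg : HasFDerivAt (fun x : Fin N → ℝ =>
        (1 - α * M) * Real.exp (x m) + α + α * ∑ n, Real.exp (x n))
        ((1 - α * M) • (ContinuousLinearMap.proj m : (Fin N → ℝ) →L[ℝ] ℝ)
          + α • ∑ n, (ContinuousLinearMap.proj n : (Fin N → ℝ) →L[ℝ] ℝ)) 0 :=
      (((hexp m).const_mul _).add_const α).add (hS.const_mul α)
    have hh : HasFDerivAt (fun x : Fin N → ℝ =>
        1 - α * M + α + α * ∑ n, Real.exp (x n))
        (α • ∑ n, (ContinuousLinearMap.proj n : (Fin N → ℝ) →L[ℝ] ℝ)) 0 := by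
      have := (hS.const_mul α).const_add (1 - α * M + α)
      convert this using 2
    have hFm : HasFDerivAt (fun x : Fin N → ℝ => abHMM.F α M x m)
        ((((1 - α * M) * Real.exp ((0 : Fin N → ℝ) m) + α
            + α * ∑ n, Real.exp ((0 : Fin N → ℝ) n))⁻¹ •
          ((1 - α * M) • (ContinuousLinearMap.proj m : (Fin N → ℝ) →L[ℝ] ℝ)
            + α • ∑ n, (ContinuousLinearMap.proj n : (Fin N → ℝ) →L[ℝ] ℝ)))
         - ((1 - α * M + α + α * ∑ n, Real.exp ((0 : Fin N → ℝ) n))⁻¹ •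
            (α • ∑ n, (ContinuousLinearMap.proj n : (Fin N → ℝ) →L[ℝ] ℝ)))) 0 := by
      have heq : (fun x : Fin N → ℝ => abHMM.F α M x m) = fun x =>
          Real.log ((1 - α * M) * Real.exp (x m) + α + α * ∑ n, Real.exp (x n))
            - Real.log (1 - α * M + α + α * ∑ n, Real.exp (x n)) := by
        funext x
        exact Real.log_div (hgpos x m).ne' (hhpos x).ne'
      rw [heq]
      exact (hg.log (hgpos 0 m).ne').sub (hh.log (hhpos 0).ne')
    refine hFm.congr_fderiv ?_
    rw [hg0 m, hh0]
    ext x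
    simp [ContinuousLinearMap.sum_apply]
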